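/- Let s ∈ ℂ with Re(s) > 0 and s ≠ 0. Let l(v,w) = a(v,w) + s² b(v,w) − d(v,w) be a sesquilinear form on a Hilbert space where a(v,v) ≥ a_min‖∇v‖², b(v,v) ≥ p_min‖v‖² with a_min, p_min ∈ (0,1], and Re(s̄·d(v,v)) ≤ 0 for all v. Then Re((s̄/|s|)·l(v,v)) ≥ min{a_min, p_min}·(Re s/|s|)·(‖∇v‖² + |s|²‖v‖²) for all v. Consequently, the solution operator N of the problem l(u,·) = F satisfies the bound C_N(s) ≤ max{a_min^{-1}, p_min^{-1}}·|s|/Re(s) in the weighted norms ‖v‖²_{H¹,s} = ‖∇v‖² + |s|²‖v‖². -/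

import Mathlib

/-- Remark 3.5 in abstract form (coercivity for `Re s > 0`): if
`l(v,v) = a(v,v) + s² b(v,v) - d(v,v)` with `a(v,v) ≥ a_min‖∇v‖²`,
`b(v,v) ≥ p_min‖v‖²` for `a_min, p_min ∈ (0,1]`, and `Re(s̄ d(v,v)) ≤ 0`, then
`Re((s̄/|s|) l(v,v)) ≥ min{a_min,p_min} (Re s/|s|) (‖∇v‖² + |s|²‖v‖²)`; hence any
solution `u` of `l(u,·) = F` satisfies
`‖u‖_{H¹,s} ≤ max{a_min⁻¹, p_min⁻¹} (|s|/Re s) ‖F‖`. -/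
theorem stmt13 {H : Type*} (s : ℂ) (hs : s ≠ 0) (hres : 0 < s.re)
    (amin pmin : ℝ) (hamin0 : 0 < amin) (hamin1 : amin ≤ 1)
    (hpmin0 : 0 < pmin) (hpmin1 : pmin ≤ 1)
    (ngrad nL2 : H → ℝ) (hng : ∀ v, 0 ≤ ngrad v) (hnL : ∀ v, 0 ≤ nL2 v)
    (l2 : H → H → ℂ) (qa qb : H → ℝ) (qd : H → ℂ)
    (hdecomp : ∀ v, l2 v v = (qa v : ℂ) + s ^ 2 * (qb v : ℂ) - qd v)
    (ha : ∀ v, amin * (ngrad v) ^ 2 ≤ qa v)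
    (hb : ∀ v, pmin * (nL2 v) ^ 2 ≤ qb v)
    (hd : ∀ v, ((starRingEnd ℂ) s * qd v).re ≤ 0) :
    (∀ v : H, min amin pmin * (s.re / ‖s‖) *
        ((ngrad v) ^ 2 + (‖s‖) ^ 2 * (nL2 v) ^ 2) ≤
      (((starRingEnd ℂ) s / (‖s‖ : ℂ)) * l2 v v).re) ∧
    (∀ (u : H) (F : H → ℂ) (CF : ℝ), 0 ≤ CF →
      (∀ v, l2 u v = F v) →
      (∀ v, ‖F v‖ ≤
        CF * Real.sqrt ((ngrad v) ^ 2 + (‖s‖) ^ 2 * (nL2 v) ^ 2)) →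
      Real.sqrt ((ngrad u) ^ 2 + (‖s‖) ^ 2 * (nL2 u) ^ 2) ≤
        max amin⁻¹ pmin⁻¹ * (‖s‖ / s.re) * CF) := by
  have hr : (0:ℝ) < ‖s‖ := norm_pos_iff.mpr hs
  set r := ‖s‖ with hrdef
  have key : ∀ v : H, min amin pmin * (s.re / r) *
        ((ngrad v) ^ 2 + r ^ 2 * (nL2 v) ^ 2) ≤
      (((starRingEnd ℂ) s / (r : ℂ)) * l2 v v).re := by
    intro v
    rw [hdecomp v, div_mul_eq_mul_div, Complex.div_ofReal_re]
    have hcs : (starRingEnd ℂ) s * s = (((r * r : ℝ)) : ℂ) := by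
      rw [mul_comm, Complex.mul_conj]
      norm_cast
      rw [← Complex.sq_norm, sq, hrdef]
    have hz : ((starRingEnd ℂ) s * ((qa v : ℂ) + s ^ 2 * (qb v : ℂ) - qd v)).re
        = s.re * qa v + r ^ 2 * s.re * qb v - ((starRingEnd ℂ) s * qd v).re := by
      have h2 : ((starRingEnd ℂ) s * (s ^ 2 * (qb v : ℂ))).re
          = r ^ 2 * s.re * qb v := by
        rw [show (starRingEnd ℂ) s * (s ^ 2 * (qb v : ℂ))
            = ((starRingEnd ℂ) s * s) * s * (qb v : ℂ) by ring, hcs]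
        simp only [Complex.mul_re, Complex.mul_im, Complex.ofReal_re, Complex.ofReal_im]
        ring
      simp only [mul_add, mul_sub, Complex.add_re, Complex.sub_re, h2]
      simp [Complex.mul_re]
    rw [hz, le_div_iff₀ hr]
    have heq : min amin pmin * (s.re / r) * ((ngrad v) ^ 2 + r ^ 2 * (nL2 v) ^ 2) * r
        = min amin pmin * s.re * ((ngrad v) ^ 2 + r ^ 2 * (nL2 v) ^ 2) := by
      field_simp
    rw [heq]
    have h1 := ha v
    have h2 := hb v
    have h3 := hd v
    have hm1 : min amin pmin ≤ amin := min_le_left _ _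
    have hm2 : min amin pmin ≤ pmin := min_le_right _ _
    have hg2 : (0:ℝ) ≤ (ngrad v) ^ 2 := sq_nonneg _
    have hL2 : (0:ℝ) ≤ (nL2 v) ^ 2 := sq_nonneg _
    nlinarith [mul_nonneg (mul_nonneg hres.le hg2) (sub_nonneg.2 hm1),
      mul_nonneg (mul_nonneg (mul_nonneg hres.le hL2) (sub_nonneg.2 hm2)) (sq_nonneg r),
      mul_nonneg hres.le (sub_nonneg.2 h1),
      mul_nonneg (mul_nonneg hres.le (sub_nonneg.2 h2)) (sq_nonneg r)]
  refine ⟨key, ?_⟩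
  intro u F CF hCF hl hF
  set X := (ngrad u) ^ 2 + r ^ 2 * (nL2 u) ^ 2 with hX
  have hX0 : 0 ≤ X := by positivity
  set t := Real.sqrt X with ht
  have ht0 : 0 ≤ t := Real.sqrt_nonneg _
  have ht2 : t ^ 2 = X := Real.sq_sqrt hX0
  have hmax : max amin⁻¹ pmin⁻¹ = (min amin pmin)⁻¹ := by
    rcases le_total amin pmin with h | h
    · rw [min_eq_left h, max_eq_left (by
        exact one_div amin ▸ one_div pmin ▸ one_div_le_one_div_of_le hamin0 h)]
    · rw [min_eq_right h, max_eq_right (by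
        exact one_div amin ▸ one_div pmin ▸ one_div_le_one_div_of_le hpmin0 h)]
  set m := min amin pmin with hm
  have hm0 : 0 < m := lt_min hamin0 hpmin0
  have hchain : m * (s.re / r) * t ^ 2 ≤ CF * t := by
    calc m * (s.re / r) * t ^ 2 = m * (s.re / r) * X := by rw [ht2]
      _ ≤ (((starRingEnd ℂ) s / (r : ℂ)) * l2 u u).re := key u
      _ ≤ ‖((starRingEnd ℂ) s / (r : ℂ)) * l2 u u‖ := Complex.re_le_norm _
      _ = ‖l2 u u‖ := by
          rw [norm_mul, norm_div, Complex.norm_conj, Complex.norm_real, Real.norm_eq_abs,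
            abs_of_pos hr, ← hrdef, div_self hr.ne', one_mul]
      _ = ‖F u‖ := by rw [hl u]
      _ ≤ CF * t := hF u
  rw [hmax]
  rcases eq_or_lt_of_le ht0 with h | h
  · rw [← h]
    positivity
  · have hle : m * (s.re / r) * t ≤ CF := by
      have h4 := mul_le_mul_of_nonneg_right hchain (le_of_lt (inv_pos.2 h))
      calc m * (s.re / r) * t = m * (s.re / r) * t ^ 2 * t⁻¹ := by
            field_simp
        _ ≤ CF * t * t⁻¹ := h4
        _ = CF := by field_simp
    have hpos : 0 < m * (s.re / r) := by positivity
    rw [show m⁻¹ * (r / s.re) * CF = CF / (m * (s.re / r)) by field_simp,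
      le_div_iff₀ hpos, mul_comm]
    exact hle
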